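/- Let (T, T^p, 𝒮) be a (-d)-Calabi–Yau triple with 𝒮 = add(S). Then for any object X of T, any integer j, and any choice of truncation triangles for X, there is an isomorphism Hom_{T/T^p}(Σ^j S, X) ≅ Hom_T(Σ^j S, X_{≤ -j+d-1}). -/

import Mathlib

open CategoryTheory Category Limits Pretriangulated
open scoped Classical

universe v u

variable (k : Type) [Field k]
variable (T : Type u) [Category.{v} T] [Preadditive T] [Linear k T] [HasZeroObject T]
  [HasShift T ℤ] [∀ n : ℤ, (shiftFunctor T n).Additive] [Pretriangulated T]
  [HasFiniteBiproducts T]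

namespace CategoryTheory.Triangulated

/-- The pre-2025 Mathlib notion of a triangulated subcategory (removed since), restored with its
old fields. -/
structure Subcategory (C : Type*) [Category C] [HasZeroObject C] [HasShift C ℤ] [Preadditive C]
    [∀ n : ℤ, (shiftFunctor C n).Additive] [Pretriangulated C] where
  P : C → Prop
  zero' : ∃ (Z : C) (_ : IsZero Z), P Z
  shift (X : C) (n : ℤ) : P X → P (X⟦n⟧)
  ext₂' (T : Triangle C) (_ : T ∈ distTriang C) : P T.obj₁ → P T.obj₃ →
    ObjectProperty.isoClosure P T.obj₂

/-- The old `Subcategory.W`: morphisms whose cone satisfies `P`. -/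
def Subcategory.W {C : Type*} [Category C] [HasZeroObject C] [HasShift C ℤ] [Preadditive C]
    [∀ n : ℤ, (shiftFunctor C n).Additive] [Pretriangulated C] (S : Subcategory C) :
    MorphismProperty C :=
  fun X Y f => ∃ (Z : C) (g : Y ⟶ Z) (h : Z ⟶ X⟦(1 : ℤ)⟧)
    (_ : Triangle.mk f g h ∈ distTriang C), S.P Z

end CategoryTheory.Triangulated

/-- `T_{>i} = ⊥(Σ^{>-i-1}𝒮)`. -/
def Tgt (𝒮 : Set T) (i : ℤ) : Set T :=
  {X | ∀ (j : ℤ), j > -i - 1 → ∀ s ∈ 𝒮, ∀ f : X ⟶ s⟦j⟧, f = 0}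

/-- `T_{≤i} = ⊥(Σ^{<-i}𝒮)`. -/
def Tle (𝒮 : Set T) (i : ℤ) : Set T :=
  {X | ∀ (j : ℤ), j < -i → ∀ s ∈ 𝒮, ∀ f : X ⟶ s⟦j⟧, f = 0}

/-- `(Σ^{≥0}𝒮)^⊥`. -/
def perpGE (𝒮 : Set T) : Set T :=
  {X | ∀ (j : ℤ), 0 ≤ j → ∀ s ∈ 𝒮, ∀ f : s⟦j⟧ ⟶ X, f = 0}

/-- `(Σ^{<0}𝒮)^⊥`. -/
def perpLT (𝒮 : Set T) : Set T :=
  {X | ∀ (j : ℤ), j < 0 → ∀ s ∈ 𝒮, ∀ f : s⟦j⟧ ⟶ X, f = 0}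

/-- A torsion pair `(𝒳, 𝒴)` on a triangulated category. -/
structure IsTorsionPair (𝒳 𝒴 : Set T) : Prop where
  orth : ∀ X ∈ 𝒳, ∀ Y ∈ 𝒴, ∀ f : X ⟶ Y, f = 0
  tri : ∀ A : T, ∃ (X Y : T) (_ : X ∈ 𝒳) (_ : Y ∈ 𝒴)
    (f : X ⟶ A) (g : A ⟶ Y) (h : Y ⟶ X⟦(1 : ℤ)⟧),
    Triangle.mk f g h ∈ distTriang T

/-- A triangulated subcategory is thick if it is closed under retracts (direct summands). -/
def IsThick (Q : Triangulated.Subcategory T) : Prop :=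
  ∀ X Y : T, (∃ (r : X ⟶ Y) (s : Y ⟶ X), s ≫ r = 𝟙 Y) → Q.P X → Q.P Y

/-- A `(-d)`-Calabi–Yau triple `(T, T^p, 𝒮)` with `𝒮 = add S`: `T` is a `k`-linear,
Hom-finite, Krull–Schmidt (idempotent complete) triangulated category, `T^p` a thick
subcategory with a bifunctorial Serre duality `D Hom(X, Y) ≅ Hom(Y, Σ^{-d} X)` for
`X ∈ T^p`, and `S` the additive generator of a simple minded collection
`𝒮 = {S₁, …, Sₘ}` inducing the two co-t-structures of (RS2), with
`⊥(Σ^{≥0}𝒮) ⊆ T^p` and `(Σ^{<0}𝒮)^⊥ ⊆ T^p`. -/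
structure CYTriple (d : ℕ) where
  homFin : ∀ X Y : T, FiniteDimensional k (X ⟶ Y)
  idem : IsIdempotentComplete T
  P : Triangulated.Subcategory T
  thick : IsThick T P
  serre : ∀ (X Y : T), P.P X → (((X ⟶ Y) →ₗ[k] k) ≃ₗ[k] (Y ⟶ X⟦(-(d : ℤ))⟧))
  serre_natY : ∀ (X Y Y' : T) (hX : P.P X) (g : Y ⟶ Y') (φ : (X ⟶ Y') →ₗ[k] k),
    serre X Y hX (φ.comp (Linear.rightComp k X g)) = g ≫ serre X Y' hX φ
  serre_natX : ∀ (X X' Y : T) (hX : P.P X) (hX' : P.P X') (u : X ⟶ X')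
    (φ : (X ⟶ Y) →ₗ[k] k),
    serre X' Y hX' (φ.comp (Linear.leftComp k Y u)) =
      serre X Y hX φ ≫ (shiftFunctor T (-(d : ℤ))).map u
  S : T
  m : ℕ
  Si : Fin m → T
  decomp : S ≅ ⨁ Si
  indec : ∀ i, ¬ IsZero (Si i) ∧ ∀ (A B : T), (Si i ≅ A ⊞ B) → IsZero A ∨ IsZero B
  smc_orth : ∀ (j : ℤ), j < 0 → ∀ f : S ⟶ S⟦j⟧, f = 0
  smc_dim : ∀ i j, Module.finrank k (Si i ⟶ Si j) = if i = j then 1 else 0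
  smc_gen : ∀ Q : Triangulated.Subcategory T, IsThick T Q → Q.P S → ∀ X, Q.P X
  cot1 : IsTorsionPair T (Tgt T {S} 0) (Tle T {S} 0)
  cot2 : IsTorsionPair T (perpGE T {S}) (perpLT T {S})
  incl1 : Tgt T {S} 0 ⊆ P.P
  incl2 : perpLT T {S} ⊆ P.P

namespace CategoryTheory.Triangulated

lemma Subcategory.W.mk {C : Type*} [Category C] [HasZeroObject C] [HasShift C ℤ] [Preadditive C]
    [∀ n : ℤ, (shiftFunctor C n).Additive] [Pretriangulated C] (S : Subcategory C)
    {T : Triangle C} (hT : T ∈ distTriang C) (h : S.P T.obj₃) : S.W T.mor₁ :=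
  ⟨_, _, _, hT, h⟩

lemma Subcategory.W.mk' {C : Type*} [Category C] [HasZeroObject C] [HasShift C ℤ] [Preadditive C]
    [∀ n : ℤ, (shiftFunctor C n).Additive] [Pretriangulated C] (S : Subcategory C)
    {T : Triangle C} (hT : T ∈ distTriang C) (h : S.P T.obj₁) : S.W T.mor₂ :=
  ⟨_, _, _, rot_of_distTriang _ hT, S.shift _ 1 h⟩

end CategoryTheory.Triangulated

section Auxiliary
set_option linter.unusedSectionVars false

open ZeroObject

variable {k T}

/-! ### Generalities on shifts and vanishing -/

lemma zero_hom_of_iso {X A B : T} (e : A ≅ B) (h : ∀ g : X ⟶ A, g = 0) (f : X ⟶ B) :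
    f = 0 := by
  have hf : f = (f ≫ e.inv) ≫ e.hom := by simp
  rw [hf, h (f ≫ e.inv), zero_comp]

lemma shift_src_zero {X Y : T} (a : ℤ) (h : ∀ g : X ⟶ Y⟦(-a)⟧, g = 0) (f : X⟦a⟧ ⟶ Y) :
    f = 0 := by
  have h2 : ((shiftEquiv T a).toAdjunction.homEquiv X Y) f = 0 := h _
  have h3 := ((shiftEquiv T a).toAdjunction.homEquiv X Y).symm_apply_apply f
  rw [← h3, h2, Adjunction.homEquiv_counit, Functor.map_zero, zero_comp]
  rfl

lemma Tle_shift {𝒮 : Set T} {X : T} {m : ℤ} (hX : X ∈ Tle T 𝒮 m) (a m' : ℤ)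
    (hm : m' = m - a) : (X⟦a⟧) ∈ Tle T 𝒮 m' := by
  intro i hi s hs f
  refine shift_src_zero a (fun g => ?_) f
  exact zero_hom_of_iso ((shiftFunctorAdd' T i (-a) (i - a) (by ring)).app s)
    (fun g' => hX (i - a) (by omega) s hs g') g

lemma Tgt_shift {𝒮 : Set T} {X : T} {m : ℤ} (hX : X ∈ Tgt T 𝒮 m) (a m' : ℤ)
    (hm : m' = m - a) : (X⟦a⟧) ∈ Tgt T 𝒮 m' := by
  intro i hi s hs f
  refine shift_src_zero a (fun g => ?_) f
  exact zero_hom_of_iso ((shiftFunctorAdd' T i (-a) (i - a) (by ring)).app s)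
    (fun g' => hX (i - a) (by omega) s hs g') g

lemma Tle_mono {𝒮 : Set T} {m m' : ℤ} (h : m ≤ m') {X : T} (hX : X ∈ Tle T 𝒮 m) :
    X ∈ Tle T 𝒮 m' := fun i hi s hs f => hX i (by omega) s hs f

lemma Tle_ext₂ {𝒮 : Set T} {m : ℤ} {Tr : Triangle T} (hTr : Tr ∈ distTriang T)
    (h₁ : Tr.obj₁ ∈ Tle T 𝒮 m) (h₃ : Tr.obj₃ ∈ Tle T 𝒮 m) : Tr.obj₂ ∈ Tle T 𝒮 m := by
  intro i hi s hs f
  obtain ⟨g, hg⟩ := Triangle.yoneda_exact₂ _ hTr f (h₁ i hi s hs _)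
  rw [hg, h₃ i hi s hs g, comp_zero]

variable {d : ℕ}

lemma P_iso (E : CYTriple k T d) {X Y : T} (h : E.P.P X) (e : X ≅ Y) : E.P.P Y :=
  E.thick X Y ⟨e.hom, e.inv, e.inv_hom_id⟩ h

lemma orthQ (E : CYTriple k T d) {m : ℤ} {X Y : T} (hX : X ∈ Tgt T {E.S} m)
    (hY : Y ∈ Tle T {E.S} m) (f : X ⟶ Y) : f = 0 := by
  have hX' : (X⟦m⟧) ∈ Tgt T {E.S} 0 := Tgt_shift hX m 0 (by omega)
  have hY' : (Y⟦m⟧) ∈ Tle T {E.S} 0 := Tle_shift hY m 0 (by omega)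
  have h0 := E.cot1.orth _ hX' _ hY' ((shiftFunctor T m).map f)
  apply (shiftFunctor T m).map_injective
  rw [h0, Functor.map_zero]

lemma TgtP (E : CYTriple k T d) {m : ℤ} {X : T} (hX : X ∈ Tgt T {E.S} m) : E.P.P X := by
  have h1 : (X⟦m⟧) ∈ Tgt T {E.S} 0 := Tgt_shift hX m 0 (by omega)
  have h2 := E.P.shift _ (-m) (E.incl1 h1)
  exact P_iso E h2 ((shiftEquiv T m).unitIso.app X).symm

/-- Truncation data for an object `Y` at level `n`, with respect to the
co-t-structure generated by `𝒮`. -/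
structure TruncData (𝒮 : Set T) (n : ℤ) (Y : T) where
  M : T
  Z : T
  e : M ⟶ Y
  t : Y ⟶ Z
  ρ : Z ⟶ M⟦(1 : ℤ)⟧
  hM : M ∈ Tgt T 𝒮 n
  hZ : Z ∈ Tle T 𝒮 n
  dist : Triangle.mk e t ρ ∈ distTriang T

lemma dist_iso₂ {X Y Y' Z : T} (a : X ⟶ Y) (b : Y ⟶ Z) (c : Z ⟶ X⟦(1 : ℤ)⟧)
    (H : Triangle.mk a b c ∈ distTriang T) (e : Y ≅ Y') :
    Triangle.mk (a ≫ e.hom) (e.inv ≫ b) c ∈ distTriang T := by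
  refine isomorphic_distinguished _ H _ ?_
  exact Triangle.isoMk _ _ (Iso.refl _) e.symm (Iso.refl _) (by simp [Triangle.mk]) (by simp [Triangle.mk])
    (by simp [Triangle.mk])

lemma trunc_nonempty (E : CYTriple k T d) (n : ℤ) (Y : T) :
    Nonempty (TruncData {E.S} n Y) := by
  obtain ⟨X₁, Y₁, hX₁, hY₁, f₁, g₁, h₁, H⟩ := E.cot1.tri (Y⟦n⟧)
  have H₂ := Pretriangulated.Triangle.shift_distinguished _ H (-n)
  set Tsh := (CategoryTheory.shiftFunctor (Triangle T) (-n)).obj (Triangle.mk f₁ g₁ h₁)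
    with hTsh
  have em : (Y⟦n⟧)⟦-n⟧ ≅ Y := ((shiftEquiv T n).unitIso.app Y).symm
  refine ⟨⟨X₁⟦(-n : ℤ)⟧, Y₁⟦(-n : ℤ)⟧, Tsh.mor₁ ≫ em.hom, em.inv ≫ Tsh.mor₂, Tsh.mor₃,
    Tgt_shift hX₁ (-n) n (by omega), Tle_shift hY₁ (-n) n (by omega), ?_⟩⟩
  exact dist_iso₂ Tsh.mor₁ Tsh.mor₂ Tsh.mor₃ H₂ em

/-- The identity truncation data of an object of `Tle`. -/
noncomputable def idTrunc {𝒮 : Set T} {n : ℤ} {B : T} (hB : B ∈ Tle T 𝒮 n) : TruncData 𝒮 n B where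
  M := 0
  Z := B
  e := 0
  t := 𝟙 B
  ρ := 0
  hM := fun _ _ _ _ f => (isZero_zero T).eq_of_src f 0
  hZ := hB
  dist := contractible_distinguished₁ B

lemma descend {n : ℤ} (E : CYTriple k T d) {Y₁ Y₂ : T} (D₁ : TruncData {E.S} n Y₁)
    (D₂ : TruncData {E.S} n Y₂) (v : Y₁ ⟶ Y₂) :
    ∃ vb : D₁.Z ⟶ D₂.Z, D₁.t ≫ vb = v ≫ D₂.t := by
  obtain ⟨vb, hvb⟩ := Triangle.yoneda_exact₂ _ D₁.dist (v ≫ D₂.t)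
    (orthQ E D₁.hM D₂.hZ _)
  exact ⟨vb, hvb.symm⟩

lemma W_trunc (E : CYTriple k T d) {n : ℤ} {Y : T} (D : TruncData {E.S} n Y) :
    E.P.W D.t :=
  Triangulated.Subcategory.W.mk' E.P D.dist (TgtP E D.hM)

/-! ### The key Serre-duality vanishing -/

lemma vanish (E : CYTriple k T d) (j : ℤ) {p : T} (hp : E.P.P p)
    (hple : p ∈ Tle T {E.S} (-j + d - 1)) (c : (E.S)⟦j⟧ ⟶ p) : c = 0 := by
  have h1 : ∀ f : p ⟶ (E.S)⟦j - (d : ℤ)⟧, f = 0 := fun f =>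
    hple (j - (d : ℤ)) (by omega) E.S rfl f
  have h2 : ∀ f : p ⟶ ((E.S)⟦j⟧)⟦-(d : ℤ)⟧, f = 0 := fun f =>
    zero_hom_of_iso ((shiftFunctorAdd' T j (-(d : ℤ)) (j - (d : ℤ)) (by ring)).app E.S) h1 f
  have h3 : ∀ f : (p⟦(d : ℤ)⟧) ⟶ (E.S)⟦j⟧, f = 0 := fun f =>
    shift_src_zero (d : ℤ) (fun g => h2 g) f
  haveI hsub : Subsingleton ((p⟦(d : ℤ)⟧) ⟶ (E.S)⟦j⟧) :=
    ⟨fun f f' => by rw [h3 f, h3 f']⟩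
  haveI hsub2 : Subsingleton (((p⟦(d : ℤ)⟧) ⟶ (E.S)⟦j⟧) →ₗ[k] k) :=
    ⟨fun φ ψ => LinearMap.ext fun x => by
      rw [Subsingleton.elim x 0, map_zero, map_zero]⟩
  haveI hsub3 : Subsingleton ((E.S)⟦j⟧ ⟶ ((p⟦(d : ℤ)⟧)⟦-(d : ℤ)⟧)) :=
    (E.serre (p⟦(d : ℤ)⟧) ((E.S)⟦j⟧) (E.P.shift p (d : ℤ) hp)).toEquiv.symm.subsingleton
  haveI hsub4 : Subsingleton ((E.S)⟦j⟧ ⟶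
      ((shiftEquiv T (d : ℤ)).functor ⋙ (shiftEquiv T (d : ℤ)).inverse).obj p) := hsub3
  have h4 : c ≫ ((shiftEquiv T (d : ℤ)).unitIso.app p).hom = 0 := Subsingleton.elim _ _
  have h5 : c = (c ≫ ((shiftEquiv T (d : ℤ)).unitIso.app p).hom) ≫
      ((shiftEquiv T (d : ℤ)).unitIso.app p).inv := by simp
  rw [h5, h4, zero_comp]

lemma ideal_vanish (E : CYTriple k T d) (j : ℤ) {p B : T} (hp : E.P.P p)
    (hB : B ∈ Tle T {E.S} (-j + d - 1)) (α : (E.S)⟦j⟧ ⟶ p) (β : p ⟶ B) :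
    α ≫ β = 0 := by
  obtain ⟨D⟩ := trunc_nonempty E (-j + d - 1) p
  obtain ⟨β', hβ'⟩ := Triangle.yoneda_exact₂ _ D.dist β (orthQ E D.hM hB _)
  have hZP : E.P.P D.Z := by
    have h2 := E.P.ext₂' _ (rot_of_distTriang _ D.dist) hp
      (E.P.shift _ 1 (TgtP E D.hM))
    obtain ⟨Z', hZ', ⟨eiso⟩⟩ := h2
    exact P_iso E hZ' eiso.symm
  have h1 : α ≫ D.t = 0 := vanish E j hZP D.hZ _
  dsimp only [Triangle.mk] at hβ'
  erw [hβ', ← assoc]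
  show (α ≫ D.t) ≫ β' = 0
  erw [h1, zero_comp]

end Auxiliary


section WcMachinery
set_option linter.unusedSectionVars false

variable {k T}

/-- The multiplicative closure of a class of morphisms. -/
inductive WcRel (W : MorphismProperty T) : ∀ {X Y : T}, (X ⟶ Y) → Prop
  | of {X Y : T} {f : X ⟶ Y} (hf : W f) : WcRel W f
  | comp {X Y Z : T} {f : X ⟶ Y} {g : Y ⟶ Z} (hf : WcRel W f) (hg : WcRel W g) :
      WcRel W (f ≫ g)

/-- The multiplicative closure as a `MorphismProperty`. -/
abbrev Wmc (W : MorphismProperty T) : MorphismProperty T := fun _ _ f => WcRel W f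

instance Wmc_containsIdentities (W : MorphismProperty T) [W.ContainsIdentities] :
    (Wmc W).ContainsIdentities :=
  ⟨fun X => WcRel.of (W.id_mem X)⟩

instance Wmc_stableComp (W : MorphismProperty T) :
    (Wmc W).IsStableUnderComposition :=
  ⟨fun f g hf hg => WcRel.comp hf hg⟩

instance Wmc_mult (W : MorphismProperty T) [W.ContainsIdentities] :
    (Wmc W).IsMultiplicative := {}

lemma exists_step (S : Triangulated.Subcategory T) {A X Y : T} (s : A ⟶ X) (hs : S.W s)
    (f : A ⟶ Y) : ∃ (Y' : T) (σ : Y ⟶ Y') (_ : S.W σ) (g : X ⟶ Y'), f ≫ σ = s ≫ g := by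
  obtain ⟨Z, gz, hz, H, mem⟩ := hs
  obtain ⟨Y', σ, f', mem'⟩ := distinguished_cocone_triangle₂ (hz ≫ f⟦(1 : ℤ)⟧')
  obtain ⟨b, hb₁, _⟩ := complete_distinguished_triangle_morphism₂ (Triangle.mk s gz hz)
    (Triangle.mk σ f' (hz ≫ f⟦(1 : ℤ)⟧')) H mem' f (𝟙 Z) (by simp [Triangle.mk])
  exact ⟨Y', σ, Triangulated.Subcategory.W.mk S mem' mem, b, hb₁.symm⟩

lemma ext_step (S : Triangulated.Subcategory T) {X' X Y : T} (f₁ f₂ : X ⟶ Y) (s : X' ⟶ X)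
    (hs : S.W s) (hf : s ≫ f₁ = s ≫ f₂) :
    ∃ (Y' : T) (t : Y ⟶ Y') (_ : S.W t), f₁ ≫ t = f₂ ≫ t := by
  obtain ⟨Z, gz, hz, H, mem⟩ := hs
  have hf₂ : s ≫ (f₁ - f₂) = 0 := by rw [Preadditive.comp_sub, hf, sub_self]
  obtain ⟨q, hq⟩ := Triangle.yoneda_exact₂ _ H _ hf₂
  dsimp only [Triangle.mk] at hq
  obtain ⟨Y', r, t0, mem'⟩ := distinguished_cocone_triangle q
  refine ⟨Y', r, ⟨_, _, _, rot_of_distTriang _ mem', S.shift _ 1 mem⟩, ?_⟩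
  have eq := comp_distTriang_mor_zero₁₂ _ mem'
  erw [← sub_eq_zero, ← Preadditive.sub_comp, hq, assoc]
  dsimp only [Triangle.mk] at eq
  erw [eq, comp_zero]

lemma exists_step_c (S : Triangulated.Subcategory T) :
    ∀ {A X : T} (s : A ⟶ X), WcRel S.W s → ∀ {Y : T} (f : A ⟶ Y),
      ∃ (Y' : T) (σ : Y ⟶ Y') (_ : WcRel S.W σ) (g : X ⟶ Y'), f ≫ σ = s ≫ g := by
  intro A X s hs
  induction hs with
  | of h =>
    intro Y f
    obtain ⟨Y', σ, hσ, g, hfs⟩ := exists_step S _ h f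
    exact ⟨Y', σ, WcRel.of hσ, g, hfs⟩
  | @comp Xc Yc Zc u v h₁ h₂ ih₁ ih₂ =>
    intro Y f
    obtain ⟨Y₁, σ₁, hσ₁, g₁, e₁⟩ := ih₁ f
    obtain ⟨Y₂, σ₂, hσ₂, g₂, e₂⟩ := ih₂ g₁
    exact ⟨Y₂, σ₁ ≫ σ₂, WcRel.comp hσ₁ hσ₂, g₂,
      by rw [← assoc, e₁, assoc, e₂, assoc]⟩

lemma ext_step_c (S : Triangulated.Subcategory T) :
    ∀ {X' X : T} (s : X' ⟶ X), WcRel S.W s → ∀ {Y : T} (f₁ f₂ : X ⟶ Y),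
      s ≫ f₁ = s ≫ f₂ → ∃ (Y' : T) (t : Y ⟶ Y') (_ : WcRel S.W t), f₁ ≫ t = f₂ ≫ t := by
  intro X' X s hs
  induction hs with
  | of h =>
    intro Y f₁ f₂ hf
    obtain ⟨Y', t, ht, he⟩ := ext_step S f₁ f₂ _ h hf
    exact ⟨Y', t, WcRel.of ht, he⟩
  | @comp Xc Yc Zc u v h₁ h₂ ih₁ ih₂ =>
    intro Y f₁ f₂ hf
    obtain ⟨Y₁, t₁, ht₁, he₁⟩ := ih₁ (v ≫ f₁) (v ≫ f₂)
      (by rw [← assoc, ← assoc]; exact hf)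
    obtain ⟨Y₂, t₂, ht₂, he₂⟩ := ih₂ (f₁ ≫ t₁) (f₂ ≫ t₁) (by
      rw [← assoc, ← assoc, he₁])
    exact ⟨Y₂, t₁ ≫ t₂, WcRel.comp ht₁ ht₂, by
      rw [← assoc, ← assoc, he₂]⟩

instance Wmc_hasLeftCalc (S : Triangulated.Subcategory T) :
    (Wmc S.W).HasLeftCalculusOfFractions where
  id_mem X := by
    obtain ⟨Z, hZ, hP⟩ := S.zero'
    exact WcRel.of ⟨Z, 0, 0, isomorphic_distinguished _ (contractible_distinguished X) _
      (Triangle.isoMk _ _ (Iso.refl _) (Iso.refl _) hZ.isoZero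
        (by simp [Triangle.mk, contractibleTriangle]) (by simp [Triangle.mk, contractibleTriangle])
        (by simp [Triangle.mk, contractibleTriangle])), hP⟩
  exists_leftFraction X Y φ := by
    obtain ⟨Y', σ, hσ, g, hfs⟩ := exists_step_c S φ.s φ.hs φ.f
    exact ⟨⟨g, σ, hσ⟩, hfs⟩
  ext X' X Y f₁ f₂ s hs hf := by
    obtain ⟨Y', t, ht, he⟩ := ext_step_c S s hs f₁ f₂ hf
    exact ⟨Y', t, ht, he⟩

lemma Wmc_isInvertedBy (S : Triangulated.Subcategory T) {D : Type u} [Category.{v} D]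
    (Q : T ⥤ D) [Q.IsLocalization S.W] : (Wmc S.W).IsInvertedBy Q := by
  intro X Y f hf
  induction hf with
  | of h => exact Localization.inverts Q S.W _ h
  | comp h₁ h₂ ih₁ ih₂ =>
    rw [Q.map_comp]
    exact @IsIso.comp_isIso _ _ _ _ _ _ _ ih₁ ih₂

lemma isLocalization_Wmc (S : Triangulated.Subcategory T) {D : Type u} [Category.{v} D]
    (Q : T ⥤ D) [Q.IsLocalization S.W] : Q.IsLocalization (Wmc S.W) := by
  refine Functor.IsLocalization.of_equivalence_source Q S.W Q (Wmc S.W)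
    (CategoryTheory.Equivalence.refl : T ≌ T) ?_ (Wmc_isInvertedBy S Q) (Functor.leftUnitor Q)
  intro X Y f hf
  exact MorphismProperty.le_isoClosure _ _ (WcRel.of hf)

end WcMachinery


section Core
set_option linter.unusedSectionVars false
set_option maxHeartbeats 800000

open ZeroObject

variable {k T}
variable {d : ℕ}

lemma cyStarCore (E : CYTriple k T d) (j : ℤ) {V₁ V₂ : T} {w : V₁ ⟶ V₂} (hw : E.P.W w)
    (D₁ : TruncData {E.S} (-j + d - 1) V₁) (D₂ : TruncData {E.S} (-j + d - 1) V₂)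
    (z : D₁.Z ⟶ D₂.Z) (hz : D₁.t ≫ z = w ≫ D₂.t) :
    ∃ (Z'' : T) (a : D₁.Z ⟶ Z'') (c : D₂.Z ⟶ Z'') (τ : V₂ ⟶ Z''),
      (∀ x : (E.S)⟦j⟧ ⟶ D₁.Z, x ≫ (z ≫ c) = x ≫ a) ∧
      (∀ x : (E.S)⟦j⟧ ⟶ D₁.Z, x ≫ a = 0 → x = 0) ∧
      (∀ u : (E.S)⟦j⟧ ⟶ Z'', ∃ v : (E.S)⟦j⟧ ⟶ D₁.Z, v ≫ a = u) ∧
      E.P.W a ∧ w ≫ τ = D₁.t ≫ a ∧ D₂.t ≫ c = τ := by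
  obtain ⟨N, π, q, Hw, hN⟩ := hw
  set Tα := (Triangle.mk w π q).invRotate with hTαdef
  have Hα : Tα ∈ distTriang T := inv_rot_of_distTriang _ Hw
  obtain ⟨Dβ⟩ := trunc_nonempty E (-j + d - 1) Tα.obj₁
  have hk : Dβ.e ≫ (Tα.mor₁ ≫ D₁.t) = 0 := orthQ E Dβ.hM D₁.hZ _
  obtain ⟨θb₀, hθb₀⟩ := Triangle.yoneda_exact₂ _ Dβ.dist (Tα.mor₁ ≫ D₁.t) hk
  let θb : Dβ.Z ⟶ D₁.Z := θb₀
  have hθb : Tα.mor₁ ≫ D₁.t = Dβ.t ≫ θb := hθb₀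
  obtain ⟨Z'', a, b, Hδ⟩ := distinguished_cocone_triangle θb
  have hK₂P : E.P.P Dβ.Z := by
    have h1 : E.P.P Tα.obj₁ := E.P.shift N (-1) hN
    have h2 := E.P.ext₂' _ (rot_of_distTriang _ Dβ.dist) h1
      (E.P.shift _ 1 (TgtP E Dβ.hM))
    obtain ⟨Z', hZ', ⟨eiso⟩⟩ := h2
    exact P_iso E hZ' eiso.symm
  have hZ'' : Z'' ∈ Tle T {E.S} (-j + d - 1) := by
    refine Tle_ext₂ (rot_of_distTriang _ Hδ) D₁.hZ ?_
    exact Tle_mono (by omega) (Tle_shift Dβ.hZ 1 (-j + d - 1 - 1) (by ring))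
  obtain ⟨τ₀, hτ₁, -⟩ := complete_distinguished_triangle_morphism Tα (Triangle.mk θb a b)
    Hα Hδ Dβ.t D₁.t hθb
  let τ : V₂ ⟶ Z'' := τ₀
  have hτw : w ≫ τ = D₁.t ≫ a := hτ₁
  have hc0 : D₂.e ≫ τ = 0 := orthQ E D₂.hM hZ'' _
  obtain ⟨c₀, hc₀⟩ := Triangle.yoneda_exact₂ _ D₂.dist τ hc0
  let c : D₂.Z ⟶ Z'' := c₀
  have hc : τ = D₂.t ≫ c := hc₀
  have e1 : D₁.t ≫ (z ≫ c) = D₁.t ≫ a := by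
    rw [← assoc, hz, assoc, ← hc]
    exact hτw
  have hzc : D₁.t ≫ (z ≫ c - a) = 0 := by
    rw [Preadditive.comp_sub, e1, sub_self]
  obtain ⟨κ, hκ⟩ := Triangle.yoneda_exact₂ _ (rot_of_distTriang _ D₁.dist) (z ≫ c - a) hzc
  have hza : ∀ x : (E.S)⟦j⟧ ⟶ D₁.Z, x ≫ (z ≫ c) = x ≫ a := by
    intro x
    have h6 : x ≫ (z ≫ c - a) = 0 := by
      dsimp only [Triangle.rotate, Triangle.mk] at hκ
      erw [hκ, ← assoc]
      exact ideal_vanish E j (E.P.shift _ 1 (TgtP E D₁.hM)) hZ'' (x ≫ D₁.ρ) κ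
    rw [Preadditive.comp_sub] at h6
    exact sub_eq_zero.mp h6
  have hainj : ∀ x : (E.S)⟦j⟧ ⟶ D₁.Z, x ≫ a = 0 → x = 0 := by
    intro x hx
    obtain ⟨ζ, hζ⟩ := Triangle.coyoneda_exact₂ _ Hδ x hx
    dsimp only [Triangle.mk] at hζ
    rw [hζ, vanish E j hK₂P Dβ.hZ ζ, zero_comp]
  have hasurj : ∀ u : (E.S)⟦j⟧ ⟶ Z'', ∃ v : (E.S)⟦j⟧ ⟶ D₁.Z, v ≫ a = u := by
    intro u
    have hub : u ≫ b = 0 :=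
      vanish E j (E.P.shift _ 1 hK₂P)
        (Tle_mono (by omega) (Tle_shift Dβ.hZ 1 (-j + d - 1 - 1) (by ring))) _
    obtain ⟨v, hv⟩ := Triangle.coyoneda_exact₃ _ Hδ u hub
    exact ⟨v, hv.symm⟩
  have haW : E.P.W a := Triangulated.Subcategory.W.mk' E.P Hδ hK₂P
  exact ⟨Z'', a, c, τ, hza, hainj, hasurj, haW, hτw, hc.symm⟩

lemma cyStarInj (E : CYTriple k T d) (j : ℤ) {V₁ V₂ : T} {w : V₁ ⟶ V₂} (hw : E.P.W w)
    (D₁ : TruncData {E.S} (-j + d - 1) V₁) (D₂ : TruncData {E.S} (-j + d - 1) V₂)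
    (z : D₁.Z ⟶ D₂.Z) (hz : D₁.t ≫ z = w ≫ D₂.t)
    (x : (E.S)⟦j⟧ ⟶ D₁.Z) (hx : x ≫ z = 0) : x = 0 := by
  obtain ⟨Z'', a, c, τ, hza, hainj, -, -, -, -⟩ := cyStarCore E j hw D₁ D₂ z hz
  apply hainj x
  rw [← hza x, ← assoc, hx, zero_comp]

lemma tower (E : CYTriple k T d) (j : ℤ) {Y Z₀ : T} (s : Y ⟶ Z₀)
    (hs : WcRel E.P.W s) :
    ∀ (D₁ : TruncData {E.S} (-j + d - 1) Y),
      ∃ (D₂ : TruncData {E.S} (-j + d - 1) Z₀) (σ : D₁.Z ⟶ D₂.Z),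
        D₁.t ≫ σ = s ≫ D₂.t ∧ ∀ x : (E.S)⟦j⟧ ⟶ D₁.Z, x ≫ σ = 0 → x = 0 := by
  induction hs with
  | @of Xo Yo f hf =>
    intro D₁
    obtain ⟨D₂⟩ := trunc_nonempty E (-j + d - 1) Yo
    obtain ⟨σ, hσ⟩ := descend E D₁ D₂ f
    exact ⟨D₂, σ, hσ, fun x hx => cyStarInj E j hf D₁ D₂ σ hσ x hx⟩
  | @comp Xc Yc Zc u v h₁ h₂ ih₁ ih₂ =>
    intro D₁
    obtain ⟨Dm, σ₁, sq₁, inj₁⟩ := ih₁ D₁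
    obtain ⟨D₂, σ₂, sq₂, inj₂⟩ := ih₂ Dm
    refine ⟨D₂, σ₁ ≫ σ₂, by rw [← assoc, sq₁, assoc, sq₂, ← assoc],
      fun x hx => inj₁ x (inj₂ (x ≫ σ₁) (by rwa [← assoc] at hx))⟩

lemma injL (E : CYTriple k T d) (j : ℤ) {D : Type u} [Category.{v} D] [Preadditive D]
    (Q : T ⥤ D) [Q.Additive] [Q.IsLocalization E.P.W] :
    ∀ (B' : T), B' ∈ Tle T {E.S} (-j + d - 1) →
      ∀ b : (E.S)⟦j⟧ ⟶ B', Q.map b = 0 → b = 0 := by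
  intro B' hB' b hQb
  haveI := isLocalization_Wmc E.P Q
  have heq : Q.map b = Q.map (0 : (E.S)⟦j⟧ ⟶ B') := by rw [hQb]; simp
  obtain ⟨Z₀, s, hs, hbs⟩ := (MorphismProperty.map_eq_iff_postcomp Q (Wmc E.P.W) b 0).1 heq
  rw [zero_comp] at hbs
  obtain ⟨D₂, σ, sq, inj⟩ := tower E j s hs (idTrunc hB')
  apply inj
  have hσ : σ = s ≫ D₂.t := (id_comp σ).symm.trans sq
  erw [hσ, ← assoc, hbs, zero_comp]

lemma cyStarSurj (E : CYTriple k T d) (j : ℤ) {D : Type u} [Category.{v} D] [Preadditive D]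
    (Q : T ⥤ D) [Q.Additive] [Q.IsLocalization E.P.W]
    {V₁ V₂ : T} {w : V₁ ⟶ V₂} (hw : E.P.W w)
    (D₁ : TruncData {E.S} (-j + d - 1) V₁) (D₂ : TruncData {E.S} (-j + d - 1) V₂)
    (z : D₁.Z ⟶ D₂.Z) (hz : D₁.t ≫ z = w ≫ D₂.t)
    (y : (E.S)⟦j⟧ ⟶ D₂.Z) : ∃ x : (E.S)⟦j⟧ ⟶ D₁.Z, x ≫ z = y := by
  obtain ⟨Z'', a, c, τ, hza, hainj, hasurj, haW, hτw, hτc⟩ := cyStarCore E j hw D₁ D₂ z hz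
  obtain ⟨x, hx⟩ := hasurj (y ≫ c)
  haveI h1 : IsIso (Q.map w) := Localization.inverts Q E.P.W w hw
  haveI h2 : IsIso (Q.map D₁.t) := Localization.inverts Q E.P.W _ (W_trunc E D₁)
  haveI h3 : IsIso (Q.map D₂.t) := Localization.inverts Q E.P.W _ (W_trunc E D₂)
  haveI h4 : IsIso (Q.map a) := Localization.inverts Q E.P.W a haW
  haveI h5 : IsIso (Q.map τ) := by
    have e : Q.map w ≫ Q.map τ = Q.map D₁.t ≫ Q.map a := by
      rw [← Q.map_comp, ← Q.map_comp, hτw]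
    haveI : IsIso (Q.map w ≫ Q.map τ) := by rw [e]; infer_instance
    exact IsIso.of_isIso_comp_left (Q.map w) (Q.map τ)
  haveI h6 : IsIso (Q.map c) := by
    have e : Q.map D₂.t ≫ Q.map c = Q.map τ := by rw [← Q.map_comp, hτc]
    haveI : IsIso (Q.map D₂.t ≫ Q.map c) := by rw [e]; exact h5
    exact IsIso.of_isIso_comp_left (Q.map D₂.t) (Q.map c)
  have hdisc : (x ≫ z - y) ≫ c = 0 := by
    rw [Preadditive.sub_comp, assoc, hza x, hx, sub_self]
  have hQ : Q.map (x ≫ z - y) = 0 := by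
    have e : Q.map (x ≫ z - y) ≫ Q.map c = 0 := by
      rw [← Q.map_comp, hdisc]
      simp
    exact (cancel_mono (Q.map c)).1 (by rw [e, zero_comp])
  have h7 := injL E j Q D₂.Z D₂.hZ _ hQ
  exact ⟨x, by rwa [sub_eq_zero] at h7⟩

lemma tower_surj (E : CYTriple k T d) (j : ℤ) {D : Type u} [Category.{v} D] [Preadditive D]
    (Q : T ⥤ D) [Q.Additive] [Q.IsLocalization E.P.W]
    {Y Z₀ : T} (s : Y ⟶ Z₀) (hs : WcRel E.P.W s) :
    ∀ (D₁ : TruncData {E.S} (-j + d - 1) Y),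
      ∃ (D₂ : TruncData {E.S} (-j + d - 1) Z₀) (σ : D₁.Z ⟶ D₂.Z),
        D₁.t ≫ σ = s ≫ D₂.t ∧ ∀ y : (E.S)⟦j⟧ ⟶ D₂.Z, ∃ x, x ≫ σ = y := by
  induction hs with
  | @of Xo Yo f hf =>
    intro D₁
    obtain ⟨D₂⟩ := trunc_nonempty E (-j + d - 1) Yo
    obtain ⟨σ, hσ⟩ := descend E D₁ D₂ f
    exact ⟨D₂, σ, hσ, fun y => cyStarSurj E j Q hf D₁ D₂ σ hσ y⟩
  | @comp Xc Yc Zc u v h₁ h₂ ih₁ ih₂ =>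
    intro D₁
    obtain ⟨Dm, σ₁, sq₁, surj₁⟩ := ih₁ D₁
    obtain ⟨D₂, σ₂, sq₂, surj₂⟩ := ih₂ Dm
    refine ⟨D₂, σ₁ ≫ σ₂, by rw [← assoc, sq₁, assoc, sq₂, ← assoc], fun y => ?_⟩
    obtain ⟨x₂, hx₂⟩ := surj₂ y
    obtain ⟨x₁, hx₁⟩ := surj₁ x₂
    exact ⟨x₁, by rw [← assoc, hx₁, hx₂]⟩

end Core


/-- Let `(T, T^p, 𝒮)` be a `(-d)`-Calabi–Yau triple with `𝒮 = add S` and let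
`Q : T ⥤ T/T^p` be the Verdier quotient functor.  Then for any object `X` of `T`, any
integer `j`, and any choice of truncation triangle
`X_{>-j+d-1} → X → X_{≤-j+d-1} → Σ X_{>-j+d-1}`, there is an isomorphism
`Hom_{T/T^p}(Σ^j S, X) ≅ Hom_T(Σ^j S, X_{≤-j+d-1})`. -/
theorem stmt9 {D : Type u} [Category.{v} D] [Preadditive D] [Linear k D]
    (d : ℕ) (E : CYTriple k T d)
    (Q : T ⥤ D) [Q.Additive] [Q.Linear k] [Q.IsLocalization E.P.W]
    (X : T) (j : ℤ)
    (A B : T) (hA : A ∈ Tgt T {E.S} (-j + d - 1)) (hB : B ∈ Tle T {E.S} (-j + d - 1))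
    (f : A ⟶ X) (g : X ⟶ B) (h : B ⟶ A⟦(1 : ℤ)⟧)
    (htri : Triangle.mk f g h ∈ distTriang T) :
    Nonempty (((E.S⟦j⟧ ⟶ B)) ≃ₗ[k] (Q.obj (E.S⟦j⟧) ⟶ Q.obj X)) := by
  have hgW : E.P.W g := Triangulated.Subcategory.W.mk' E.P htri (TgtP E hA)
  haveI hgiso : IsIso (Q.map g) := Localization.inverts Q E.P.W g hgW
  haveI := isLocalization_Wmc E.P Q
  refine ⟨LinearEquiv.ofBijective
    ⟨⟨fun b => Q.map b ≫ inv (Q.map g), ?_⟩, ?_⟩ ⟨?_, ?_⟩⟩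
  · intro b₁ b₂
    rw [Q.map_add, Preadditive.add_comp]
  · intro r b
    dsimp only
    rw [Functor.map_smul, Linear.smul_comp]
    rfl
  · -- injectivity
    intro b₁ b₂ hb
    dsimp only [LinearMap.coe_mk, AddHom.coe_mk] at hb
    have h1 : Q.map b₁ = Q.map b₂ := by
      rwa [cancel_mono (inv (Q.map g))] at hb
    have h2 : Q.map (b₁ - b₂) = 0 := by rw [Functor.map_sub, h1, sub_self]
    have h3 := injL E j Q B hB _ h2
    exact sub_eq_zero.mp h3
  · -- surjectivity
    intro α
    obtain ⟨φ, hφ⟩ := Localization.exists_leftFraction Q (Wmc E.P.W) (α ≫ Q.map g)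
    have hms : (α ≫ Q.map g) ≫ Q.map φ.s = Q.map φ.f := by
      rw [hφ]
      exact MorphismProperty.LeftFraction.map_comp_map_s φ Q
        (Localization.inverts Q (Wmc E.P.W))
    obtain ⟨D₂, σ, sq, surjσ⟩ := tower_surj E j Q φ.s φ.hs (idTrunc hB)
    have hσ : σ = φ.s ≫ D₂.t := (id_comp σ).symm.trans sq
    obtain ⟨b, hb⟩ := surjσ (φ.f ≫ D₂.t)
    haveI : IsIso (Q.map D₂.t) := Localization.inverts Q E.P.W _ (W_trunc E D₂)
    haveI : IsIso (Q.map φ.s) := Localization.inverts Q (Wmc E.P.W) _ φ.hs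
    have e1 : Q.map b ≫ (Q.map φ.s ≫ Q.map D₂.t) =
        (α ≫ Q.map g) ≫ (Q.map φ.s ≫ Q.map D₂.t) :=
      calc Q.map b ≫ (Q.map φ.s ≫ Q.map D₂.t)
          = Q.map (b ≫ (φ.s ≫ D₂.t)) := by erw [Q.map_comp, Q.map_comp]
        _ = Q.map (b ≫ σ) := by rw [hσ]; rfl
        _ = Q.map (φ.f ≫ D₂.t) := by rw [hb]
        _ = Q.map φ.f ≫ Q.map D₂.t := Q.map_comp _ _
        _ = ((α ≫ Q.map g) ≫ Q.map φ.s) ≫ Q.map D₂.t := by rw [hms]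
        _ = (α ≫ Q.map g) ≫ (Q.map φ.s ≫ Q.map D₂.t) := by rw [assoc]
    have key : Q.map b = α ≫ Q.map g := (cancel_mono (Q.map φ.s ≫ Q.map D₂.t)).1 e1
    refine ⟨b, ?_⟩
    dsimp only [LinearMap.coe_mk, AddHom.coe_mk]
    erw [key, assoc, IsIso.hom_inv_id, comp_id]
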